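/- Let f : X → ℝ ∪ {+∞} be proper lower semicontinuous convex on a Banach space X, with {f ≤ 0} nonempty, and suppose there exist δ > 0 and Δ > 0 such that {f ≤ −δ} is nonempty and dist(x, {f ≤ −δ}) ≤ Δ for all x with f(x) ≤ 0. Then dist(x, {f ≤ 0}) ≤ (Δ/δ)·max(f(x), 0) for all x ∈ X. -/

import Mathlib

open Topology
open scoped ENNReal

-- Convexity for extended-real-valued functions.
def ERealConvexOn {X : Type*} [NormedAddCommGroup X] [NormedSpace ℝ X]
    (f : X → EReal) : Prop :=
  ∀ x y : X, ∀ a b : ℝ, 0 ≤ a → 0 ≤ b → a + b = 1 →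
    f (a • x + b • y) ≤ (a : EReal) * f x + (b : EReal) * f y

theorem stmt10 {X : Type*} [NormedAddCommGroup X] [NormedSpace ℝ X] [CompleteSpace X]
    (f : X → EReal) (hlsc : LowerSemicontinuous f) (hconv : ERealConvexOn f)
    (hproper : ∃ x, f x ≠ ⊤) (hbot : ∀ x, f x ≠ ⊥)
    (hne : {y | f y ≤ 0}.Nonempty)
    (δ Δ : ℝ) (hδ : 0 < δ) (hΔ : 0 < Δ)
    (hne' : {y | f y ≤ ((-δ : ℝ) : EReal)}.Nonempty)
    (hdist : ∀ x, f x ≤ 0 → Metric.infDist x {y | f y ≤ ((-δ : ℝ) : EReal)} ≤ Δ) :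
    ∀ x, (EMetric.infEdist x {y | f y ≤ 0} : EReal) ≤
        ((Δ / δ : ℝ) : EReal) * max (f x) 0 := by
  intro x
  set S₀ : Set X := {y | f y ≤ 0} with hS₀
  set S₁ : Set X := {y | f y ≤ ((-δ : ℝ) : EReal)} with hS₁
  rcases le_or_gt (f x) 0 with hx0 | hx0
  · -- x ∈ S₀, LHS = 0, RHS ≥ 0
    have h1 : EMetric.infEdist x S₀ = 0 := EMetric.infEdist_zero_of_mem hx0
    rw [h1]
    have : (0 : EReal) ≤ ((Δ / δ : ℝ) : EReal) * max (f x) 0 :=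
      mul_nonneg (by exact_mod_cast (div_pos hΔ hδ).le) (le_max_right _ _)
    simpa using this
  rcases eq_or_ne (f x) ⊤ with htop | htop
  · have : ((Δ / δ : ℝ) : EReal) * max (f x) 0 = ⊤ := by
      rw [htop, max_eq_left le_top, EReal.coe_mul_top_of_pos (div_pos hΔ hδ)]
    rw [this]; exact le_top
  -- f x is a positive real r
  set r : ℝ := (f x).toReal with hr
  have hfx : f x = (r : EReal) := (EReal.coe_toReal htop (hbot x)).symm
  have hrpos : 0 < r := by
    have := hx0; rw [hfx] at this; exact_mod_cast this
  have hrδ : 0 < r + δ := by linarith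
  set lam : ℝ := δ / (r + δ) with hlam
  set mu : ℝ := r / (r + δ) with hmu
  have hlampos : 0 < lam := div_pos hδ hrδ
  have hmupos : 0 < mu := div_pos hrpos hrδ
  have hsum : lam + mu = 1 := by rw [hlam, hmu]; field_simp; ring
  set D : ℝ := Metric.infDist x S₀ with hD
  have hDnn : 0 ≤ D := Metric.infDist_nonneg
  -- key real inequality
  have key : D ≤ mu * (D + Δ) := by
    apply le_of_forall_pos_le_add
    intro ε hε
    set ε₀ : ℝ := ε / (2 * mu) with hε₀
    have hε₀pos : 0 < ε₀ := div_pos hε (by positivity)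
    obtain ⟨z, hz, hxz⟩ := (Metric.infDist_lt_iff hne).1
      (show Metric.infDist x S₀ < D + ε₀ by rw [← hD]; linarith)
    have hz' : Metric.infDist z S₁ ≤ Δ := hdist z hz
    obtain ⟨u, hu, hzu⟩ := (Metric.infDist_lt_iff hne').1
      (show Metric.infDist z S₁ < Δ + ε₀ by linarith)
    -- w is in S₀
    set w : X := lam • x + mu • u with hw
    have hfw : f w ≤ 0 := by
      have h1 := hconv x u lam mu hlampos.le hmupos.le hsum
      have h2 : (mu : EReal) * f u ≤ ((mu * (-δ) : ℝ) : EReal) := by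
        rw [EReal.coe_mul]
        exact mul_le_mul_of_nonneg_left hu (by exact_mod_cast hmupos.le)
      have h3 : (lam : EReal) * f x = ((lam * r : ℝ) : EReal) := by
        rw [hfx]; exact_mod_cast (EReal.coe_mul lam r).symm
      calc f w ≤ (lam : EReal) * f x + (mu : EReal) * f u := h1
        _ ≤ ((lam * r : ℝ) : EReal) + ((mu * (-δ) : ℝ) : EReal) := by
            rw [h3]
            exact add_le_add_right h2 _
        _ = ((lam * r + mu * (-δ) : ℝ) : EReal) := by exact_mod_cast (EReal.coe_add _ _).symm
        _ = 0 := by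
            norm_cast
            rw [hlam, hmu]; field_simp; ring
    have hwS : w ∈ S₀ := hfw
    have hxw : x - w = mu • (x - u) := by
      rw [hw]
      have h1x : x = lam • x + mu • x := by rw [← add_smul, hsum, one_smul]
      nth_rewrite 1 [h1x]
      rw [smul_sub]
      abel
    have hDw : D ≤ mu * dist x u := by
      have h4 : D ≤ dist x w := Metric.infDist_le_dist_of_mem hwS
      have h5 : dist x w = mu * dist x u := by
        rw [dist_eq_norm, hxw, norm_smul, Real.norm_eq_abs, abs_of_pos hmupos,
          ← dist_eq_norm]
      linarith [h4, h5.le]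
    have h6 : dist x u ≤ dist x z + dist z u := dist_triangle x z u
    have h7 : D ≤ mu * (D + ε₀ + (Δ + ε₀)) := by
      have : mu * dist x u ≤ mu * (D + ε₀ + (Δ + ε₀)) := by
        apply mul_le_mul_of_nonneg_left _ hmupos.le
        linarith
      linarith
    have h8 : mu * (D + ε₀ + (Δ + ε₀)) = mu * (D + Δ) + 2 * mu * ε₀ := by ring
    have h9 : 2 * mu * ε₀ = ε := by
      rw [hε₀]; field_simp
    linarith
  have hDfin : D ≤ Δ / δ * r := by
    have h10 : D * (r + δ) ≤ r * (D + Δ) := by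
      have := mul_le_mul_of_nonneg_right key hrδ.le
      rw [hmu] at this
      field_simp at this
      nlinarith [this]
    rw [div_mul_eq_mul_div, le_div_iff₀ hδ]
    nlinarith [h10]
  -- transfer to EReal
  have hmax : max (f x) 0 = ((r : ℝ) : EReal) := by
    rw [hfx]; exact max_eq_left (by exact_mod_cast hrpos.le)
  rw [hmax, ← EReal.coe_mul]
  have hedist : EMetric.infEdist x S₀ = ENNReal.ofReal D :=
    (ENNReal.ofReal_toReal (Metric.infEdist_ne_top hne)).symm
  rw [hedist, EReal.coe_ennreal_ofReal, max_eq_left hDnn]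
  exact_mod_cast hDfin
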